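/- Let c ∈ ℂ, r > 0, and let G ⊆ ℂ be an open set containing the closed disc {s : |s − c| ≤ r}. Let b ∈ ℂ, b ≠ 0, with b and −b in the open disc {s : |s − c| < r}, and let f₀ be holomorphic on G. Suppose functions fₙ, gₙ holomorphic on G and constants αₙ, βₙ satisfy the Bleistein scheme: αₙ = (fₙ(b) + fₙ(−b))/2, βₙ = (fₙ(b) − fₙ(−b))/(2b), fₙ(t) = αₙ + βₙ·t + (t² − b²)·gₙ(t) for all t ∈ G, and fₙ₊₁ = gₙ′, for n = 0, 1, 2, …. Define rational functions Rₙ(s, t) recursively by R₀(s, t) = 1/(s − t) and Rₙ₊₁(s, t) = (−1/(s² − b²))·(d/ds)Rₙ(s, t). Then for every n ≥ 0 and every t in the open disc with t ≠ b and t ≠ −b, fₙ(t) = (1/(2πi)) ∮_{|s−c|=r} Rₙ(s, t) f₀(s) ds, the contour traversed once counterclockwise. -/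

import Mathlib

open Complex Metric

lemma my_circleIntegral_neg (f : ℂ → ℂ) (c : ℂ) (r : ℝ) :
    (∮ z in C(c, r), -(f z)) = -∮ z in C(c, r), f z := by
  simp only [circleIntegral, smul_neg, intervalIntegral.integral_neg]

lemma my_circleInt_deriv_zero {c : ℂ} {r : ℝ} (hr : 0 < r) {V : Set ℂ} (hV : IsOpen V)
    (hsub : sphere c r ⊆ V) {w : ℂ → ℂ} (hw : DifferentiableOn ℂ w V) :
    (∮ z in C(c, r), deriv w z) = 0 := by
  have key : ∀ θ ∈ Set.uIcc (0:ℝ) (2*Real.pi),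
      HasDerivAt (fun θ => w (circleMap c r θ))
        (deriv w (circleMap c r θ) * (circleMap 0 r θ * I)) θ := by
    intro θ _
    have hmem : circleMap c r θ ∈ V := hsub (circleMap_mem_sphere c hr.le θ)
    exact ((hw.differentiableAt (hV.mem_nhds hmem)).hasDerivAt).comp θ
      (hasDerivAt_circleMap c r θ)
  have h1 : Continuous fun θ => deriv w (circleMap c r θ) :=
    ((hw.analyticOnNhd hV).deriv.continuousOn).comp_continuous
      (continuous_circleMap c r) (fun θ => hsub (circleMap_mem_sphere c hr.le θ))
  have hcont : Continuous fun θ => deriv w (circleMap c r θ) * (circleMap 0 r θ * I) :=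
    h1.mul ((continuous_circleMap 0 r).mul continuous_const)
  have heq : (∮ z in C(c, r), deriv w z)
      = ∫ θ in (0:ℝ)..2*Real.pi, deriv w (circleMap c r θ) * (circleMap 0 r θ * I) := by
    rw [circleIntegral]
    apply intervalIntegral.integral_congr
    intro θ _
    simp [deriv_circleMap, mul_comm]
  rw [heq, intervalIntegral.integral_eq_sub_of_hasDerivAt key
    (hcont.intervalIntegrable 0 (2*Real.pi))]
  have : circleMap c r (2*Real.pi) = circleMap c r 0 := by
    simpa using (periodic_circleMap c r) 0
  rw [this, sub_self]

lemma my_ibp {c : ℂ} {r : ℝ} (hr : 0 < r) {V : Set ℂ} (hV : IsOpen V)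
    (hsub : sphere c r ⊆ V) {u v : ℂ → ℂ}
    (hu : DifferentiableOn ℂ u V) (hv : DifferentiableOn ℂ v V) :
    (∮ z in C(c, r), deriv u z * v z) = -∮ z in C(c, r), u z * deriv v z := by
  have hcu : ContinuousOn (deriv u) V := (hu.analyticOnNhd hV).deriv.continuousOn
  have hcv : ContinuousOn (deriv v) V := (hv.analyticOnNhd hV).deriv.continuousOn
  have h2 : CircleIntegrable (fun z => u z * deriv v z) c r :=
    ((hu.continuousOn.mul hcv).mono hsub).circleIntegrable hr.le
  have hsum : CircleIntegrable (fun z => deriv u z * v z + u z * deriv v z) c r :=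
    (((hcu.mul hv.continuousOn).add (hu.continuousOn.mul hcv)).mono hsub).circleIntegrable hr.le
  have hzero : (∮ z in C(c, r), (deriv u z * v z + u z * deriv v z)) = 0 := by
    rw [circleIntegral.integral_congr hr.le
      (g := fun z => deriv (fun x => u x * v x) z) ?_]
    · exact my_circleInt_deriv_zero hr hV hsub (hu.mul hv)
    · intro z hz
      have hmem := hV.mem_nhds (hsub hz)
      exact (((hu.differentiableAt hmem).hasDerivAt.mul
        (hv.differentiableAt hmem).hasDerivAt)).deriv.symm
  have hsplit : (∮ z in C(c, r), deriv u z * v z)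
      = (∮ z in C(c, r), ((deriv u z * v z + u z * deriv v z) - u z * deriv v z)) := by
    apply circleIntegral.integral_congr hr.le
    intro z _
    ring
  rw [hsplit, circleIntegral.integral_sub hsum h2, hzero, zero_sub]

lemma my_U_open (t b : ℂ) : IsOpen {s : ℂ | s ≠ t ∧ s ≠ b ∧ s ≠ -b} := by
  have : {s : ℂ | s ≠ t ∧ s ≠ b ∧ s ≠ -b}
      = ({t}ᶜ : Set ℂ) ∩ (({b}ᶜ : Set ℂ) ∩ ({-b}ᶜ : Set ℂ)) := by
    ext s; simp [Set.mem_compl_iff, and_assoc]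
  rw [this]
  exact isOpen_compl_singleton.inter (isOpen_compl_singleton.inter isOpen_compl_singleton)

lemma my_sq_ne (b s : ℂ) (h1 : s ≠ b) (h2 : s ≠ -b) : s ^ 2 - b ^ 2 ≠ 0 := by
  have : s ^ 2 - b ^ 2 = (s - b) * (s + b) := by ring
  rw [this]
  exact mul_ne_zero (sub_ne_zero.mpr h1) (fun h => h2 (eq_neg_of_add_eq_zero_left h))

lemma my_R_analytic (b : ℂ) (R : ℕ → ℂ → ℂ → ℂ)
    (hR0 : ∀ s t : ℂ, R 0 s t = (s - t)⁻¹)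
    (hRsucc : ∀ n, ∀ s t : ℂ,
      R (n + 1) s t = (-(s ^ 2 - b ^ 2)⁻¹) * deriv (fun x => R n x t) s)
    (t : ℂ) :
    ∀ n, AnalyticOnNhd ℂ (fun s => R n s t) {s : ℂ | s ≠ t ∧ s ≠ b ∧ s ≠ -b} := by
  intro n
  induction n with
  | zero =>
      have he : (fun s => R 0 s t) = fun s => (s - t)⁻¹ := funext fun s => hR0 s t
      rw [he]
      refine DifferentiableOn.analyticOnNhd ?_ (my_U_open t b)
      exact (differentiableOn_id.sub (differentiableOn_const t)).inv
        (fun s hs => sub_ne_zero.mpr hs.1)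
  | succ n ih =>
      have he : (fun s => R (n+1) s t)
          = fun s => (-(s ^ 2 - b ^ 2)⁻¹) * deriv (fun x => R n x t) s :=
        funext fun s => hRsucc n s t
      rw [he]
      refine AnalyticOnNhd.mul ?_ ih.deriv
      refine DifferentiableOn.analyticOnNhd ?_ (my_U_open t b)
      exact (((differentiable_pow 2).differentiableOn.sub
        (differentiableOn_const (b ^ 2))).inv
        (fun s hs => my_sq_ne b s hs.2.1 hs.2.2)).neg

lemma my_R_growth (b : ℂ) (R : ℕ → ℂ → ℂ → ℂ)
    (hRsucc : ∀ n, ∀ s t : ℂ,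
      R (n + 1) s t = (-(s ^ 2 - b ^ 2)⁻¹) * deriv (fun x => R n x t) s)
    (t : ℂ)
    (han : ∀ n, AnalyticOnNhd ℂ (fun s => R n s t) {s : ℂ | s ≠ t ∧ s ≠ b ∧ s ≠ -b})
    (hbase : ∃ C M : ℝ, 0 ≤ C ∧ 2*‖t‖ + 2*‖b‖ + 2 ≤ M ∧
      ∀ s : ℂ, M ≤ ‖s‖ → ‖R 0 s t‖ ≤ C / ‖s‖ ^ (2*0+1)) :
    ∀ n : ℕ, ∃ C M : ℝ, 0 ≤ C ∧ 2*‖t‖ + 2*‖b‖ + 2 ≤ M ∧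
      ∀ s : ℂ, M ≤ ‖s‖ → ‖R n s t‖ ≤ C / ‖s‖ ^ (2*n+1) := by
  intro n
  induction n with
  | zero => exact hbase
  | succ n ih =>
      obtain ⟨C, M, hC, hM, hbd⟩ := ih
      have hMpos : (2:ℝ) ≤ M := by
        have h1 := norm_nonneg t; have h2 := norm_nonneg b; linarith
      refine ⟨C * 2 ^ (2*n+4), 2 * M, by positivity, by linarith, ?_⟩
      intro s hs
      set x : ℝ := ‖s‖ with hxdef
      have hx2M : 2 * M ≤ x := hs
      have hxM : M ≤ x := by linarith
      have hx2 : (2:ℝ) ≤ x := by linarith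
      have hx1 : (1:ℝ) ≤ x := by linarith
      have hx0 : (0:ℝ) < x := by linarith
      have hhalf : (0:ℝ) < x / 2 := by linarith
      -- closed ball around s stays in U
      have hsubU : closedBall s (x/2) ⊆ {z : ℂ | z ≠ t ∧ z ≠ b ∧ z ≠ -b} := by
        intro z hz
        have hdist : ‖s - z‖ ≤ x / 2 := by
          rw [mem_closedBall, dist_comm, dist_eq_norm] at hz; exact hz
        have hzn : x / 2 ≤ ‖z‖ := by
          have := norm_sub_norm_le s z
          rw [← hxdef] at this
          linarith
        have hnt : ‖t‖ < x/2 := by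
          have h2 := norm_nonneg b; nlinarith [hM]
        have hnb : ‖b‖ < x/2 := by
          have h2 := norm_nonneg t; nlinarith [hM]
        refine ⟨?_, ?_, ?_⟩
        · intro h; rw [h] at hzn; linarith
        · intro h; rw [h] at hzn; linarith
        · intro h; rw [h, norm_neg] at hzn; linarith
      have hdc : DiffContOnCl ℂ (fun y => R n y t) (ball s (x/2)) := by
        apply DifferentiableOn.diffContOnCl
        rw [closure_ball s (ne_of_gt hhalf)]
        exact ((han n).differentiableOn).mono hsubU
      have hsph : ∀ z ∈ sphere s (x/2), ‖R n z t‖ ≤ C / (x/2) ^ (2*n+1) := by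
        intro z hz
        have hdist : ‖s - z‖ ≤ x / 2 := by
          rw [mem_sphere, dist_comm, dist_eq_norm] at hz; rw [hz]
        have hzn : x / 2 ≤ ‖z‖ := by
          have := norm_sub_norm_le s z
          rw [← hxdef] at this
          linarith
        have hzM : M ≤ ‖z‖ := by linarith
        calc ‖R n z t‖ ≤ C / ‖z‖ ^ (2*n+1) := hbd z hzM
          _ ≤ C / (x/2) ^ (2*n+1) := by
              apply div_le_div_of_nonneg_left hC (pow_pos hhalf _)
              exact pow_le_pow_left₀ (le_of_lt hhalf) hzn _
      have hder : ‖deriv (fun y => R n y t) s‖ ≤ (C / (x/2) ^ (2*n+1)) / (x/2) :=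
        Complex.norm_deriv_le_of_forall_mem_sphere_norm_le hhalf hdc hsph
      have hinv : ‖(s ^ 2 - b ^ 2)⁻¹‖ ≤ ((x/2) ^ 2)⁻¹ := by
        have hb2 : ‖b‖ ≤ x / 2 := by
          have h2 := norm_nonneg t; nlinarith [hM]
        have hlow : (x/2) ^ 2 ≤ ‖s ^ 2 - b ^ 2‖ := by
          have h1 : ‖s ^ 2‖ - ‖b ^ 2‖ ≤ ‖s ^ 2 - b ^ 2‖ := norm_sub_norm_le _ _
          have h2 : ‖s ^ 2‖ = x ^ 2 := by rw [norm_pow, ← hxdef]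
          have h3 : ‖b ^ 2‖ = ‖b‖ ^ 2 := norm_pow b 2
          nlinarith [norm_nonneg b]
        rw [norm_inv]
        exact inv_anti₀ (pow_pos hhalf _) hlow
      have hfin : ‖R (n+1) s t‖ ≤ C / (x/2) ^ (2*n+4) := by
        rw [hRsucc n s t]
        rw [norm_mul, norm_neg]
        calc ‖(s ^ 2 - b ^ 2)⁻¹‖ * ‖deriv (fun x => R n x t) s‖
            ≤ ((x/2) ^ 2)⁻¹ * ((C / (x/2) ^ (2*n+1)) / (x/2)) := by
              apply mul_le_mul hinv hder (norm_nonneg _) (by positivity)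
          _ = C / (x/2) ^ (2*n+4) := by
              rw [eq_div_iff (by positivity : ((x:ℝ)/2) ^ (2*n+4) ≠ 0)]
              field_simp
              ring
      calc ‖R (n+1) s t‖ ≤ C / (x/2) ^ (2*n+4) := hfin
        _ = C * 2 ^ (2*n+4) / x ^ (2*n+4) := by
            rw [div_pow, div_div_eq_mul_div]
        _ ≤ C * 2 ^ (2*n+4) / x ^ (2*(n+1)+1) := by
            apply div_le_div_of_nonneg_left (by positivity) (pow_pos hx0 _)
            exact pow_le_pow_right₀ hx1 (by omega)

lemma my_vanish (c : ℂ) (r : ℝ) (hr : 0 < r) (b t : ℂ)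
    (hbmem : b ∈ ball c r) (hbmem' : -b ∈ ball c r) (ht : t ∈ ball c r)
    (F : ℂ → ℂ)
    (hFan : AnalyticOnNhd ℂ F {s : ℂ | s ≠ t ∧ s ≠ b ∧ s ≠ -b})
    (C M : ℝ) (hC : 0 ≤ C) (hM : 0 < M)
    (hbound : ∀ s : ℂ, M ≤ ‖s‖ → ‖F s‖ ≤ C / ‖s‖ ^ 2) :
    (∮ s in C(c, r), F s) = 0 := by
  have hmem : ∀ z : ℂ, r ≤ dist z c → z ∈ {s : ℂ | s ≠ t ∧ s ≠ b ∧ s ≠ -b} := by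
    intro z hz
    rw [mem_ball] at ht hbmem hbmem'
    refine ⟨?_, ?_, ?_⟩ <;> · rintro rfl; linarith
  have key : ∀ ρ : ℝ, r ≤ ρ → (∮ s in C(c, ρ), F s) = ∮ s in C(c, r), F s := by
    intro ρ hρ
    apply circleIntegral_eq_of_differentiable_on_annulus_off_countable hr hρ
      Set.countable_empty
    · exact hFan.continuousOn.mono (fun z hz => hmem z (by
        simpa [mem_ball, not_lt] using hz.2))
    · intro z hz
      have h2 : r ≤ dist z c :=
        le_of_lt (by simpa [mem_closedBall, not_le] using hz.1.2)
      exact (hFan z (hmem z h2)).differentiableAt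
  have hbnd : ∀ ε : ℝ, 0 < ε → ‖∮ s in C(c, r), F s‖ ≤ ε := by
    intro ε hε
    set ρ : ℝ := max (max r (M + ‖c‖)) (max (2*‖c‖ + 1) (8*Real.pi*C/ε + 1)) with hρdef
    have hρr : r ≤ ρ := le_max_of_le_left (le_max_left _ _)
    have hρM : M + ‖c‖ ≤ ρ := le_max_of_le_left (le_max_right _ _)
    have hρc : 2*‖c‖ + 1 ≤ ρ := le_max_of_le_right (le_max_left _ _)
    have hρε : 8*Real.pi*C/ε + 1 ≤ ρ := le_max_of_le_right (le_max_right _ _)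
    have hρ0 : 0 < ρ := lt_of_lt_of_le hr hρr
    have hρhalf : ρ / 2 ≤ ρ - ‖c‖ := by
      have := norm_nonneg c; linarith
    have hsphb : ∀ z ∈ sphere c ρ, ‖F z‖ ≤ 4 * C / ρ ^ 2 := by
      intro z hz
      have hd : dist z c = ρ := hz
      have hzn : ρ - ‖c‖ ≤ ‖z‖ := by
        have h1 : dist z c ≤ ‖z‖ + ‖c‖ := by
          rw [dist_eq_norm]; exact norm_sub_le z c
        linarith [hd ▸ h1]
      have hzM : M ≤ ‖z‖ := by linarith
      calc ‖F z‖ ≤ C / ‖z‖ ^ 2 := hbound z hzM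
        _ ≤ C / (ρ/2) ^ 2 := by
            apply div_le_div_of_nonneg_left hC (by positivity)
            apply pow_le_pow_left₀ (by positivity)
            linarith
        _ = 4 * C / ρ ^ 2 := by
            rw [div_pow]
            rw [div_div_eq_mul_div]
            ring
    have hint : ‖∮ s in C(c, ρ), F s‖ ≤ 2 * Real.pi * ρ * (4 * C / ρ ^ 2) :=
      circleIntegral.norm_integral_le_of_norm_le_const hρ0.le hsphb
    have heq : 2 * Real.pi * ρ * (4 * C / ρ ^ 2) = 8 * Real.pi * C / ρ := by
      field_simp; ring
    have hfin : 8 * Real.pi * C / ρ ≤ ε := by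
      rw [div_le_iff₀ hρ0]
      have h1 : 8 * Real.pi * C / ε * ε = 8 * Real.pi * C := by
        field_simp
      nlinarith [mul_le_mul_of_nonneg_left hρε hε.le]
    rw [← key ρ hρr]
    calc ‖∮ s in C(c, ρ), F s‖ ≤ 2 * Real.pi * ρ * (4 * C / ρ ^ 2) := hint
      _ = 8 * Real.pi * C / ρ := heq
      _ ≤ ε := hfin
  have : ‖∮ s in C(c, r), F s‖ ≤ 0 := by
    apply le_of_forall_pos_le_add
    intro ε hε
    simpa using hbnd ε hε
  simpa using norm_le_zero_iff.mp this

/-- Cauchy-type integral representation `fₙ(t) = (1/(2πi)) ∮ Rₙ(s,t) f₀(s) ds` for the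
functions `fₙ` of the Bleistein scheme, where the rational kernels satisfy
`R₀(s,t) = 1/(s−t)` and `Rₙ₊₁(s,t) = (−1/(s²−b²))·(d/ds)Rₙ(s,t)`. -/
theorem bleistein_fn_cauchy_repr
    (c : ℂ) (r : ℝ) (hr : 0 < r) (G : Set ℂ) (hG : IsOpen G)
    (hGsub : closedBall c r ⊆ G)
    (b : ℂ) (hb : b ≠ 0) (hbmem : b ∈ ball c r) (hbmem' : -b ∈ ball c r)
    (f g : ℕ → ℂ → ℂ) (α β : ℕ → ℂ)
    (hf : ∀ n, DifferentiableOn ℂ (f n) G)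
    (hg : ∀ n, DifferentiableOn ℂ (g n) G)
    (hα : ∀ n, α n = (f n b + f n (-b)) / 2)
    (hβ : ∀ n, β n = (f n b - f n (-b)) / (2 * b))
    (hdecomp : ∀ n, ∀ t ∈ G, f n t = α n + β n * t + (t ^ 2 - b ^ 2) * g n t)
    (hstep : ∀ n, ∀ t ∈ G, f (n + 1) t = deriv (g n) t)
    (R : ℕ → ℂ → ℂ → ℂ)
    (hR0 : ∀ s t : ℂ, R 0 s t = (s - t)⁻¹)
    (hRsucc : ∀ n, ∀ s t : ℂ,
      R (n + 1) s t = (-(s ^ 2 - b ^ 2)⁻¹) * deriv (fun x => R n x t) s) :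
    ∀ n : ℕ, ∀ t ∈ ball c r, t ≠ b → t ≠ -b →
      f n t = (2 * (Real.pi : ℂ) * Complex.I)⁻¹ *
        (∮ s in C(c, r), R n s t * f 0 s) := by
  intro n t ht htb htb'
  have hπ : (2 * (Real.pi : ℂ) * Complex.I) ≠ 0 :=
    mul_ne_zero (mul_ne_zero two_ne_zero (by exact_mod_cast Real.pi_ne_zero)) I_ne_zero
  have hUopen : IsOpen {s : ℂ | s ≠ t ∧ s ≠ b ∧ s ≠ -b} := my_U_open t b
  have han := my_R_analytic b R hR0 hRsucc t
  have hbase : ∃ C M : ℝ, 0 ≤ C ∧ 2*‖t‖ + 2*‖b‖ + 2 ≤ M ∧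
      ∀ s : ℂ, M ≤ ‖s‖ → ‖R 0 s t‖ ≤ C / ‖s‖ ^ (2*0+1) := by
    refine ⟨2, 2*‖t‖ + 2*‖b‖ + 2, by norm_num, le_refl _, ?_⟩
    intro s hs
    have h1 := norm_nonneg t; have h2 := norm_nonneg b
    have hx0 : (0:ℝ) < ‖s‖ := by linarith
    rw [hR0, norm_inv]
    have hlow : ‖s‖/2 ≤ ‖s - t‖ := by
      have := norm_sub_norm_le s t; linarith
    have hp1 : (2*0+1 : ℕ) = 1 := rfl
    rw [hp1, pow_one]
    calc ‖s - t‖⁻¹ ≤ (‖s‖/2)⁻¹ := inv_anti₀ (by linarith) hlow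
      _ = 2 / ‖s‖ := by rw [inv_div]
  have hgrow := my_R_growth b R hRsucc t han hbase
  have hA : ∀ k : ℕ, ∀ p q : ℂ, (∮ s in C(c, r), R (k+1) s t * (p + q * s)) = 0 := by
    intro k p q
    obtain ⟨C, M, hC, hM, hbd⟩ := hgrow (k+1)
    have h1 := norm_nonneg t; have h2 := norm_nonneg b
    have hM2 : (2:ℝ) ≤ M := by linarith
    apply my_vanish c r hr b t hbmem hbmem' ht _ ?_ (C * (‖p‖ + ‖q‖)) M
      (by positivity) (by linarith) ?_
    · exact (han (k+1)).mul
        (((differentiableOn_const p).add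
          ((differentiableOn_const q).mul differentiableOn_id)).analyticOnNhd hUopen)
    · intro s hs
      have hx1 : (1:ℝ) ≤ ‖s‖ := by linarith
      have hx0 : (0:ℝ) < ‖s‖ := by linarith
      calc ‖R (k+1) s t * (p + q*s)‖ = ‖R (k+1) s t‖ * ‖p + q*s‖ := norm_mul _ _
        _ ≤ (C / ‖s‖ ^ (2*(k+1)+1)) * ((‖p‖ + ‖q‖) * ‖s‖) := by
            apply mul_le_mul (hbd s hs) ?_ (norm_nonneg _) (by positivity)
            calc ‖p + q*s‖ ≤ ‖p‖ + ‖q‖ * ‖s‖ := by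
                  refine le_trans (norm_add_le _ _) ?_
                  rw [norm_mul]
              _ ≤ (‖p‖ + ‖q‖) * ‖s‖ := by nlinarith [norm_nonneg p, norm_nonneg q]
        _ ≤ (C / ‖s‖ ^ 3) * ((‖p‖ + ‖q‖) * ‖s‖) := by
            apply mul_le_mul_of_nonneg_right ?_ (by positivity)
            exact div_le_div_of_nonneg_left hC (by positivity)
              (pow_le_pow_right₀ hx1 (by omega))
        _ = C * (‖p‖ + ‖q‖) / ‖s‖ ^ 2 := by
            have h3 : ‖s‖ ≠ 0 := ne_of_gt hx0
            rw [eq_div_iff (pow_ne_zero 2 h3), div_mul_eq_mul_div, div_mul_eq_mul_div,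
              div_eq_iff (pow_ne_zero 3 h3)]
            ring
  have hcauchy : ∀ (φ : ℂ → ℂ), DifferentiableOn ℂ φ G → ∀ w ∈ ball c r,
      (∮ s in C(c, r), (s - w)⁻¹ * φ s) = 2 * (Real.pi : ℂ) * Complex.I * φ w := by
    intro φ hφ w hw
    have h := Complex.two_pi_I_inv_smul_circleIntegral_sub_inv_smul_of_differentiable_on_off_countable
      Set.countable_empty hw (hφ.continuousOn.mono hGsub)
      (fun x hx => hφ.differentiableAt (hG.mem_nhds (hGsub (ball_subset_closedBall hx.1))))
    simp only [smul_eq_mul] at h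
    rw [inv_mul_eq_iff_eq_mul₀ hπ] at h
    exact h
  have hVopen : IsOpen (G ∩ {s : ℂ | s ≠ t ∧ s ≠ b ∧ s ≠ -b}) := hG.inter hUopen
  have hsphV : sphere c r ⊆ G ∩ {s : ℂ | s ≠ t ∧ s ≠ b ∧ s ≠ -b} := by
    intro z hz
    have hzG : z ∈ G := hGsub (sphere_subset_closedBall hz)
    have hd : dist z c = r := hz
    rw [mem_ball] at hbmem hbmem'
    have ht' := mem_ball.mp ht
    refine ⟨hzG, ?_, ?_, ?_⟩ <;> · rintro rfl; linarith
  have hmain : ∀ k m : ℕ,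
      (∮ s in C(c, r), R k s t * f m s)
        = 2 * (Real.pi : ℂ) * Complex.I * f (m + k) t := by
    intro k
    induction k with
    | zero =>
        intro m
        have he : (∮ s in C(c, r), R 0 s t * f m s)
            = ∮ s in C(c, r), (s - t)⁻¹ * f m s := by
          apply circleIntegral.integral_congr hr.le
          intro z _
          simp only
          rw [hR0]
        rw [he, hcauchy (f m) (hf m) t ht, Nat.add_zero]
    | succ k ih =>
        intro m
        have hud : DifferentiableOn ℂ (fun s => R k s t)
            (G ∩ {s : ℂ | s ≠ t ∧ s ≠ b ∧ s ≠ -b}) :=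
          ((han k).differentiableOn).mono Set.inter_subset_right
        have hqd : DifferentiableOn ℂ (fun s => (α m + β m * s) * (s^2 - b^2)⁻¹)
            (G ∩ {s : ℂ | s ≠ t ∧ s ≠ b ∧ s ≠ -b}) := by
          apply DifferentiableOn.mul
          · exact (differentiableOn_const _).add
              ((differentiableOn_const _).mul differentiableOn_id)
          · exact ((differentiable_pow 2).differentiableOn.sub
              (differentiableOn_const _)).inv
              (fun z hz => my_sq_ne b z hz.2.2.1 hz.2.2.2)
        have hvd : DifferentiableOn ℂ
            (fun s => -(g m s) - (α m + β m * s) * (s^2 - b^2)⁻¹)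
            (G ∩ {s : ℂ | s ≠ t ∧ s ≠ b ∧ s ≠ -b}) :=
          (((hg m).mono Set.inter_subset_left).neg).sub hqd
        have hderiv_u : ∀ z ∈ sphere c r,
            deriv (fun s => R k s t) z = -(z^2 - b^2) * R (k+1) z t := by
          intro z hz
          have hzV := hsphV hz
          have hne := my_sq_ne b z hzV.2.2.1 hzV.2.2.2
          rw [hRsucc k z t]
          rw [show (-(z^2 - b^2)) * ((-(z^2 - b^2)⁻¹) * deriv (fun x => R k x t) z)
            = ((z^2 - b^2) * (z^2 - b^2)⁻¹) * deriv (fun x => R k x t) z from by ring,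
            mul_inv_cancel₀ hne, one_mul]
        have hs1 : (∮ s in C(c, r), R (k+1) s t * f m s)
            = ∮ z in C(c, r), deriv (fun s => R k s t) z *
                (-(g m z) - (α m + β m * z) * (z^2 - b^2)⁻¹) := by
          apply circleIntegral.integral_congr hr.le
          intro z hz
          have hzV := hsphV hz
          have hne := my_sq_ne b z hzV.2.2.1 hzV.2.2.2
          simp only
          rw [hderiv_u z hz, hdecomp m z hzV.1]
          field_simp
          ring
        have hderiv_v : ∀ z ∈ sphere c r,
            deriv (fun s => -(g m s) - (α m + β m * s) * (s^2 - b^2)⁻¹) z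
              = -(f (m+1) z)
                - deriv (fun s => (α m + β m * s) * (s^2 - b^2)⁻¹) z := by
          intro z hz
          have hzV := hsphV hz
          have h1 : DifferentiableAt ℂ (g m) z :=
            (hg m).differentiableAt (hG.mem_nhds hzV.1)
          have h2 : DifferentiableAt ℂ (fun s => (α m + β m * s) * (s^2 - b^2)⁻¹) z :=
            hqd.differentiableAt (hVopen.mem_nhds hzV)
          have hd2 : HasDerivAt (fun s => -(g m s) - (α m + β m * s) * (s^2 - b^2)⁻¹)
              (-(deriv (g m) z) - deriv (fun s => (α m + β m * s) * (s^2 - b^2)⁻¹) z) z :=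
            (h1.hasDerivAt.neg).sub h2.hasDerivAt
          rw [hd2.deriv, hstep m z hzV.1]
        have hcu : ContinuousOn (fun z => R k z t) (sphere c r) :=
          hud.continuousOn.mono hsphV
        have hcf : ContinuousOn (f (m+1)) (sphere c r) :=
          ((hf (m+1)).continuousOn.mono Set.inter_subset_left).mono hsphV
        have hcdq : ContinuousOn
            (fun z => deriv (fun s => (α m + β m * s) * (s^2 - b^2)⁻¹) z) (sphere c r) :=
          ((hqd.analyticOnNhd hVopen).deriv.continuousOn).mono hsphV
        have hint1 : CircleIntegrable (fun z => -(R k z t * f (m+1) z)) c r :=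
          ((hcu.mul hcf).neg).circleIntegrable hr.le
        have hint2 : CircleIntegrable
            (fun z => R k z t * deriv (fun s => (α m + β m * s) * (s^2 - b^2)⁻¹) z) c r :=
          (hcu.mul hcdq).circleIntegrable hr.le
        have hBC : (∮ z in C(c, r), deriv (fun s => R k s t) z *
              (-(g m z) - (α m + β m * z) * (z^2 - b^2)⁻¹))
            = -∮ z in C(c, r), R k z t *
                deriv (fun s => -(g m s) - (α m + β m * s) * (s^2 - b^2)⁻¹) z := by
          refine Eq.trans (circleIntegral.integral_congr hr.le (fun z _ => rfl))
            (Eq.trans (my_ibp hr hVopen hsphV hud hvd) ?_)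
          congr 1
        have hCD : (∮ z in C(c, r), R k z t *
              deriv (fun s => -(g m s) - (α m + β m * s) * (s^2 - b^2)⁻¹) z)
            = (∮ z in C(c, r), -(R k z t * f (m+1) z)) -
              ∮ z in C(c, r), R k z t *
                deriv (fun s => (α m + β m * s) * (s^2 - b^2)⁻¹) z := by
          have hcongr : (∮ z in C(c, r), R k z t *
                deriv (fun s => -(g m s) - (α m + β m * s) * (s^2 - b^2)⁻¹) z)
              = ∮ z in C(c, r), (-(R k z t * f (m+1) z) -
                  R k z t * deriv (fun s => (α m + β m * s) * (s^2 - b^2)⁻¹) z) := by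
            apply circleIntegral.integral_congr hr.le
            intro z hz
            simp only
            rw [hderiv_v z hz]
            ring
          rw [hcongr]
          exact circleIntegral.integral_sub hint1 hint2
        have hD : (∮ z in C(c, r), -(R k z t * f (m+1) z))
            = -(2 * (Real.pi : ℂ) * Complex.I * f ((m+1) + k) t) := by
          have h := my_circleIntegral_neg (fun z => R k z t * f (m+1) z) c r
          rw [ih (m+1)] at h
          exact h
        have hE : (∮ z in C(c, r), R k z t *
            deriv (fun s => (α m + β m * s) * (s^2 - b^2)⁻¹) z) = 0 := by
          have h2 := my_ibp hr hVopen hsphV hud hqd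
          have hcg : (∮ z in C(c, r), deriv (fun s => R k s t) z *
                (fun s => (α m + β m * s) * (s^2 - b^2)⁻¹) z)
              = ∮ z in C(c, r), -(R (k+1) z t * (α m + β m * z)) := by
            apply circleIntegral.integral_congr hr.le
            intro z hz
            have hzV := hsphV hz
            have hne := my_sq_ne b z hzV.2.2.1 hzV.2.2.2
            simp only
            rw [hderiv_u z hz]
            field_simp
          have hneg := my_circleIntegral_neg (fun z => R (k+1) z t * (α m + β m * z)) c r
          rw [hA k (α m) (β m), neg_zero] at hneg
          have hleft : (∮ z in C(c, r), deriv (fun s => R k s t) z *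
              (fun s => (α m + β m * s) * (s^2 - b^2)⁻¹) z) = 0 := hcg.trans hneg
          rw [hleft] at h2
          exact neg_eq_zero.mp h2.symm
        have hidx : (m + 1) + k = m + (k + 1) := by omega
        calc (∮ s in C(c, r), R (k+1) s t * f m s)
            = ∮ z in C(c, r), deriv (fun s => R k s t) z *
                (-(g m z) - (α m + β m * z) * (z^2 - b^2)⁻¹) := hs1
          _ = -∮ z in C(c, r), R k z t *
                deriv (fun s => -(g m s) - (α m + β m * s) * (s^2 - b^2)⁻¹) z := hBC
          _ = -((∮ z in C(c, r), -(R k z t * f (m+1) z)) -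
                ∮ z in C(c, r), R k z t *
                  deriv (fun s => (α m + β m * s) * (s^2 - b^2)⁻¹) z) := by rw [hCD]
          _ = -(∮ z in C(c, r), -(R k z t * f (m+1) z)) := by rw [hE, sub_zero]
          _ = 2 * (Real.pi : ℂ) * Complex.I * f ((m+1) + k) t := by rw [hD, neg_neg]
          _ = 2 * (Real.pi : ℂ) * Complex.I * f (m + (k+1)) t := by rw [hidx]
  rw [hmain n 0, Nat.zero_add, inv_mul_cancel_left₀ hπ]
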